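/- (Lemma 2 of the paper.) Let G be a simple graph on a finite vertex type V (with decidable equality and adjacency), let N₁ and N₂ be subgraphs of G whose edge sets each form a matching (N₁.IsMatching and N₂.IsMatching), and let c, d : V → M be a Majorana family in the Clifford algebra of a quadratic form Q over ℂ. Then there exists an orientation o of the edges of N₁.edgeSet ∪ N₂.edgeSet such that the stabilizers P(e) := ι(c (o e).1) * ι(d (o e).2) pairwise commute: for all e₁, e₂ ∈ N₁.edgeSet ∪ N₂.edgeSet, P(e₁) * P(e₂) = P(e₂) * P(e₁). -/

import Mathlib

open Classical in
/-- Two fixed-point-free involutive permutations admit a common proper 2-coloring. -/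
lemma aux_fpf_coloring {W : Type*} (τ₁ τ₂ : Equiv.Perm W)
    (h1 : ∀ w, τ₁ (τ₁ w) = w) (h2 : ∀ w, τ₂ (τ₂ w) = w)
    (f1 : ∀ w, τ₁ w ≠ w) (f2 : ∀ w, τ₂ w ≠ w) :
    ∃ ε : W → Bool, (∀ w, ε (τ₁ w) ≠ ε w) ∧ (∀ w, ε (τ₂ w) ≠ ε w) := by
  have h1' : τ₁ * τ₁ = 1 := Equiv.ext h1
  have h2' : τ₂ * τ₂ = 1 := Equiv.ext h2
  have h1inv : τ₁⁻¹ = τ₁ := inv_eq_of_mul_eq_one_right h1'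
  have h2inv : τ₂⁻¹ = τ₂ := inv_eq_of_mul_eq_one_right h2'
  set π : Equiv.Perm W := τ₂ * τ₁ with hπ
  have hπinv : π⁻¹ = τ₁ * τ₂ := by rw [hπ, mul_inv_rev, h1inv, h2inv]
  -- conjugation facts
  have conj1 : ∀ k : ℤ, τ₁ * π ^ k * τ₁ = π ^ (-k) := by
    intro k
    have base : τ₁ * π * τ₁ = π⁻¹ := by
      rw [hπinv, hπ]
      ext w
      simp [Equiv.Perm.mul_apply, h1]
    have h := map_zpow (MulAut.conj τ₁) π k
    simp only [MulAut.conj_apply, h1inv] at h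
    rw [h, base, inv_zpow, zpow_neg]
  have conj2 : ∀ k : ℤ, τ₂ * π ^ k * τ₂ = π ^ (-k) := by
    intro k
    have base : τ₂ * π * τ₂ = π⁻¹ := by
      rw [hπinv, hπ]
      ext w
      simp [Equiv.Perm.mul_apply, h2]
    have h := map_zpow (MulAut.conj τ₂) π k
    simp only [MulAut.conj_apply, h2inv] at h
    rw [h, base, inv_zpow, zpow_neg]
  have conj1' : ∀ (k : ℤ) (w : W), τ₁ ((π ^ k) w) = (π ^ (-k)) (τ₁ w) := by
    intro k w
    have := congrArg (fun g : Equiv.Perm W => g (τ₁ w)) (conj1 k)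
    simpa [Equiv.Perm.mul_apply, h1 w] using this
  have conj2' : ∀ (k : ℤ) (w : W), τ₂ ((π ^ k) w) = (π ^ (-k)) (τ₂ w) := by
    intro k w
    have := congrArg (fun g : Equiv.Perm W => g (τ₂ w)) (conj2 k)
    simpa [Equiv.Perm.mul_apply, h2 w] using this
  have hτ₂v : ∀ v, τ₂ v = π (τ₁ v) := by
    intro v; simp [hπ, Equiv.Perm.mul_apply, h1 v]
  -- key: v and τ₁ v are never in the same π-cycle
  have noSame : ∀ v, ¬ π.SameCycle v (τ₁ v) := by
    rintro v ⟨k, hk⟩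
    rcases Int.even_or_odd k with ⟨m, hm⟩ | ⟨m, hm⟩
    · -- k = m + m : τ₁ fixes π^m v
      apply f1 ((π ^ m) v)
      rw [conj1' m v, ← hk, ← Equiv.Perm.mul_apply, ← zpow_add,
        show -m + k = m by omega]
    · -- k = 2m+1 : τ₂ fixes π^(m+1) v
      apply f2 ((π ^ (m + 1)) v)
      rw [conj2' (m + 1) v, hτ₂v v, ← hk]
      have : π ((π ^ k) v) = (π ^ (k + 1)) v := by
        rw [← Equiv.Perm.mul_apply, ← zpow_one_add, show 1 + k = k + 1 by omega]
      rw [this, ← Equiv.Perm.mul_apply, ← zpow_add,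
        show -(m + 1) + (k + 1) = m + 1 by omega]
  have sc_tau : ∀ {u v : W}, π.SameCycle u v → π.SameCycle (τ₁ u) (τ₁ v) := by
    rintro u v ⟨k, hk⟩
    exact ⟨-k, by rw [← conj1' k u, hk]⟩
  -- the setoid whose classes are the ⟨τ₁, τ₂⟩-orbits
  have req : Equivalence (fun u v => π.SameCycle u v ∨ π.SameCycle u (τ₁ v)) := by
    constructor
    · intro u; exact Or.inl (Equiv.Perm.SameCycle.refl _ _)
    · rintro u v (h | h)
      · exact Or.inl h.symm
      · refine Or.inr ?_
        have := (sc_tau h).symm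
        rwa [h1 v] at this
    · rintro u v w (h | h) (h' | h')
      · exact Or.inl (h.trans h')
      · exact Or.inr (h.trans h')
      · exact Or.inr (h.trans (sc_tau h'))
      · have := sc_tau h'
        rw [h1 w] at this
        exact Or.inl (h.trans this)
  let s : Setoid W := ⟨_, req⟩
  let rep : W → W := fun v => (Quotient.mk s v).out
  have rep_spec : ∀ v, π.SameCycle (rep v) v ∨ π.SameCycle (rep v) (τ₁ v) :=
    fun v => Quotient.mk_out (s := s) v
  have rep_eq : ∀ {u v : W}, (π.SameCycle u v ∨ π.SameCycle u (τ₁ v)) → rep u = rep v := by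
    intro u v h
    show (Quotient.mk s u).out = (Quotient.mk s v).out
    congr 1
    exact Quotient.sound h
  refine ⟨fun v => if π.SameCycle (rep v) v then true else false, ?_, ?_⟩
  · intro v
    have hrep : rep (τ₁ v) = rep v := by
      exact rep_eq (Or.inr (Equiv.Perm.SameCycle.refl _ _))
    simp only [hrep]
    have key : π.SameCycle (rep v) (τ₁ v) ↔ ¬ π.SameCycle (rep v) v := by
      constructor
      · intro h h'
        exact noSame v (h'.symm.trans h)
      · intro h'
        rcases rep_spec v with h | h
        · exact absurd h h'
        · exact h
    by_cases h : π.SameCycle (rep v) v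
    · have hn : ¬ π.SameCycle (rep v) (τ₁ v) := fun h' => (key.mp h') h
      simp [h, hn]
    · simp [h, key.mpr h]
  · intro v
    have hsc : π.SameCycle (τ₁ v) (τ₂ v) := ⟨1, by simp [hτ₂v v]⟩
    have hrep : rep (τ₂ v) = rep v := by
      refine rep_eq (Or.inr ⟨-1, ?_⟩)
      rw [hτ₂v v]
      simp [zpow_neg_one]
    simp only [hrep]
    have key : π.SameCycle (rep v) (τ₂ v) ↔ ¬ π.SameCycle (rep v) v := by
      constructor
      · intro h h'
        exact noSame v (h'.symm.trans (h.trans hsc.symm))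
      · intro h'
        rcases rep_spec v with h | h
        · exact absurd h h'
        · exact h.trans hsc
    by_cases h : π.SameCycle (rep v) v
    · have hn : ¬ π.SameCycle (rep v) (τ₂ v) := fun h' => (key.mp h') h
      simp [h, hn]
    · simp [h, key.mpr h]

/-- Any two involutions admit a 2-coloring proper on their non-fixed pairs. -/
lemma aux_invol_coloring {V : Type*} (σ₁ σ₂ : V → V)
    (i1 : Function.Involutive σ₁) (i2 : Function.Involutive σ₂) :
    ∃ ε : V → Bool, (∀ v, σ₁ v ≠ v → ε (σ₁ v) ≠ ε v) ∧
      (∀ v, σ₂ v ≠ v → ε (σ₂ v) ≠ ε v) := by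
  classical
  -- double the vertex set to remove fixed points
  have ext_def : ∀ (σ : V → V), Function.Involutive σ →
      ∃ τ : Equiv.Perm (V ⊕ V), (∀ w, τ (τ w) = w) ∧ (∀ w, τ w ≠ w) ∧
        (∀ v, σ v ≠ v → τ (Sum.inl v) = Sum.inl (σ v)) := by
    intro σ hσ
    let f : V ⊕ V → V ⊕ V := Sum.elim
      (fun v => if σ v = v then Sum.inr v else Sum.inl (σ v))
      (fun v => if σ v = v then Sum.inl v else Sum.inr (σ v))
    have hns : ∀ v : V, σ v ≠ v → σ (σ v) ≠ σ v := by
      intro v hv hh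
      exact hv (((hσ v).symm.trans hh).symm)
    have hf : Function.Involutive f := by
      rintro (v | v) <;> by_cases h : σ v = v
      · simp [f, h]
      · simp only [f, Sum.elim_inl, if_neg h]
        rw [if_neg (hns v h), hσ v]
      · simp [f, h]
      · simp only [f, Sum.elim_inr, if_neg h]
        rw [if_neg (hns v h), hσ v]
    refine ⟨hf.toPerm, hf, ?_, ?_⟩
    · rintro (v | v) <;> by_cases h : σ v = v
      · simp [Function.Involutive.coe_toPerm, f, h]
      · simp only [Function.Involutive.coe_toPerm, f, Sum.elim_inl, if_neg h]
        exact fun hc => h (Sum.inl.inj hc)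
      · simp [Function.Involutive.coe_toPerm, f, h]
      · simp only [Function.Involutive.coe_toPerm, f, Sum.elim_inr, if_neg h]
        exact fun hc => h (Sum.inr.inj hc)
    · intro v hv
      simp [Function.Involutive.coe_toPerm, f, hv]
  obtain ⟨τ₁, ht1, hf1, hc1⟩ := ext_def σ₁ i1
  obtain ⟨τ₂, ht2, hf2, hc2⟩ := ext_def σ₂ i2
  obtain ⟨ε, he1, he2⟩ := aux_fpf_coloring τ₁ τ₂ ht1 ht2 hf1 hf2
  refine ⟨fun v => ε (Sum.inl v), fun v hv => ?_, fun v hv => ?_⟩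
  · have := he1 (Sum.inl v); rwa [hc1 v hv] at this
  · have := he2 (Sum.inl v); rwa [hc2 v hv] at this

/-- Product of two pairs of pairwise anticommuting elements commute. -/
lemma comm_of_anticomm {R : Type*} [Ring R] {A B C D : R}
    (hAC : A*C = -(C*A)) (hAD : A*D = -(D*A)) (hBC : B*C = -(C*B)) (hBD : B*D = -(D*B)) :
    (A*B)*(C*D) = (C*D)*(A*B) := by
  have s : ∀ {a b : R}, a*b = -(b*a) → ∀ x, a*(b*x) = -(b*(a*x)) := by
    intro a b h x
    rw [← mul_assoc, h, neg_mul, mul_assoc]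
  calc (A*B)*(C*D) = A*(B*(C*D)) := by rw [mul_assoc]
    _ = A*(-(C*(B*D))) := by rw [s hBC]
    _ = -(A*(C*(B*D))) := by rw [mul_neg]
    _ = -(-(C*(A*(B*D)))) := by rw [s hAC]
    _ = C*(A*(B*D)) := neg_neg _
    _ = C*(A*(-(D*B))) := by rw [hBD]
    _ = -(C*(A*(D*B))) := by rw [mul_neg, mul_neg]
    _ = -(C*(-(D*(A*B)))) := by rw [s hAD]
    _ = C*(D*(A*B)) := by rw [mul_neg, neg_neg]
    _ = (C*D)*(A*B) := by rw [mul_assoc]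

/-- Lemma 2: the edges of two matchings can be oriented so that all the corresponding
stabilizers, built from a Majorana family in the Clifford algebra, pairwise commute. -/
theorem two_matchings_stabilizers_commute {V : Type*} [Fintype V] [DecidableEq V]
    {M : Type*} [AddCommGroup M] [Module ℂ M]
    (Q : QuadraticForm ℂ M) (G : SimpleGraph V) [DecidableRel G.Adj]
    (N₁ N₂ : G.Subgraph) (h₁ : N₁.IsMatching) (h₂ : N₂.IsMatching)
    (c d : V → M)
    (hQc : ∀ v, Q (c v) = 1) (hQd : ∀ v, Q (d v) = 1)
    (hcc : ∀ v w, v ≠ w → QuadraticMap.polar Q (c v) (c w) = 0)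
    (hdd : ∀ v w, v ≠ w → QuadraticMap.polar Q (d v) (d w) = 0)
    (hcd : ∀ v w, QuadraticMap.polar Q (c v) (d w) = 0) :
    ∃ o : ↥(N₁.edgeSet ∪ N₂.edgeSet) → V × V,
      (∀ e : ↥(N₁.edgeSet ∪ N₂.edgeSet), (o e).1 ≠ (o e).2) ∧
      (∀ e : ↥(N₁.edgeSet ∪ N₂.edgeSet), Sym2.mk (o e).1 (o e).2 = (e : Sym2 V)) ∧
      (∀ e₁ e₂ : ↥(N₁.edgeSet ∪ N₂.edgeSet),
        (CliffordAlgebra.ι Q (c (o e₁).1) * CliffordAlgebra.ι Q (d (o e₁).2)) *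
          (CliffordAlgebra.ι Q (c (o e₂).1) * CliffordAlgebra.ι Q (d (o e₂).2)) =
        (CliffordAlgebra.ι Q (c (o e₂).1) * CliffordAlgebra.ι Q (d (o e₂).2)) *
          (CliffordAlgebra.ι Q (c (o e₁).1) * CliffordAlgebra.ι Q (d (o e₁).2))) := by
  classical
  -- involutions coming from the two matchings
  have mk_sigma : ∀ (N : G.Subgraph), N.IsMatching →
      ∃ σ : V → V, Function.Involutive σ ∧ (∀ u v, N.Adj u v → σ u = v) := by
    intro N hN
    obtain ⟨σ, hσ⟩ : ∃ σ : V → V, ∀ v, σ v = if h : v ∈ N.verts then (hN h).choose else v :=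
      ⟨_, fun _ => rfl⟩
    have adj_imp : ∀ u v, N.Adj u v → σ u = v := by
      intro u v h
      rw [hσ u, dif_pos h.fst_mem]
      exact ((hN h.fst_mem).choose_spec.2 v h).symm
    refine ⟨σ, ?_, adj_imp⟩
    intro v
    by_cases h : v ∈ N.verts
    · have hadj : N.Adj v (σ v) := by
        rw [hσ v, dif_pos h]
        exact (hN h).choose_spec.1
      exact adj_imp _ _ hadj.symm
    · rw [hσ v, dif_neg h, hσ v, dif_neg h]
  obtain ⟨σ₁, i1, adj1⟩ := mk_sigma N₁ h₁
  obtain ⟨σ₂, i2, adj2⟩ := mk_sigma N₂ h₂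
  obtain ⟨ε, hε1, hε2⟩ := aux_invol_coloring σ₁ σ₂ i1 i2
  -- edges are properly colored
  have color_ne : ∀ u v : V, Sym2.mk u v ∈ N₁.edgeSet ∪ N₂.edgeSet → ε u ≠ ε v := by
    rintro u v (h | h)
    · have hadj : N₁.Adj u v := SimpleGraph.Subgraph.mem_edgeSet.mp h
      have hne : σ₁ u ≠ u := by rw [adj1 u v hadj]; exact fun hc => (G.ne_of_adj (N₁.adj_sub hadj)) hc.symm
      have := hε1 u hne
      rw [adj1 u v hadj] at this
      exact this.symm
    · have hadj : N₂.Adj u v := SimpleGraph.Subgraph.mem_edgeSet.mp h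
      have hne : σ₂ u ≠ u := by rw [adj2 u v hadj]; exact fun hc => (G.ne_of_adj (N₂.adj_sub hadj)) hc.symm
      have := hε2 u hne
      rw [adj2 u v hadj] at this
      exact this.symm
  -- construct the orientation
  have hor : ∀ e : ↥(N₁.edgeSet ∪ N₂.edgeSet), ∃ p : V × V,
      Sym2.mk p.1 p.2 = (e : Sym2 V) ∧ p.1 ≠ p.2 ∧
      ε p.1 = (if (e : Sym2 V) ∈ N₁.edgeSet then false else true) := by
    rintro ⟨e, he⟩
    induction e using Sym2.ind with
    | _ u v =>
      have hne : u ≠ v := by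
        rcases he with h | h
        · exact G.ne_of_adj (N₁.adj_sub (SimpleGraph.Subgraph.mem_edgeSet.mp h))
        · exact G.ne_of_adj (N₂.adj_sub (SimpleGraph.Subgraph.mem_edgeSet.mp h))
      have hcol : ε u ≠ ε v := color_ne u v he
      by_cases hb : ε u = (if (Sym2.mk u v) ∈ N₁.edgeSet then false else true)
      · exact ⟨(u, v), rfl, hne, hb⟩
      · refine ⟨(v, u), Sym2.eq_swap, hne.symm, ?_⟩
        simp only
        cases h1' : ε u <;> cases h2' : ε v <;>
          cases h3' : (if (Sym2.mk u v) ∈ N₁.edgeSet then false else true) <;>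
          simp_all
  choose o ho1 ho2 ho3 using hor
  have tcol : ∀ e : ↥(N₁.edgeSet ∪ N₂.edgeSet), ε (o e).2 ≠ ε (o e).1 := by
    intro e
    have := color_ne (o e).1 (o e).2 (by rw [ho1 e]; exact e.2)
    exact this.symm
  have ho4 : ∀ e : ↥(N₁.edgeSet ∪ N₂.edgeSet),
      ε (o e).2 = (if (e : Sym2 V) ∈ N₁.edgeSet then true else false) := by
    intro e
    have h3 := ho3 e
    have ht := tcol e
    by_cases hm : (e : Sym2 V) ∈ N₁.edgeSet <;>
      [rw [if_pos hm] at h3 ⊢; rw [if_neg hm] at h3 ⊢] <;>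
      cases hb : ε (o e).2 <;> simp_all
  -- adjacency facts
  have hadj1 : ∀ e : ↥(N₁.edgeSet ∪ N₂.edgeSet), (e : Sym2 V) ∈ N₁.edgeSet →
      N₁.Adj (o e).1 (o e).2 := by
    intro e h
    apply SimpleGraph.Subgraph.mem_edgeSet.mp
    rw [ho1 e]
    exact h
  have hadj2 : ∀ e : ↥(N₁.edgeSet ∪ N₂.edgeSet), (e : Sym2 V) ∉ N₁.edgeSet →
      N₂.Adj (o e).1 (o e).2 := by
    intro e h
    apply SimpleGraph.Subgraph.mem_edgeSet.mp
    rw [ho1 e]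
    exact e.2.resolve_left h
  refine ⟨o, ho2, ho1, ?_⟩
  intro e₁ e₂
  rcases eq_or_ne e₁ e₂ with rfl | hne
  · rfl
  have hval : (e₁ : Sym2 V) ≠ (e₂ : Sym2 V) := fun h => hne (Subtype.ext h)
  -- distinct heads
  have heads : (o e₁).1 ≠ (o e₂).1 := by
    intro hx
    by_cases m1 : (e₁ : Sym2 V) ∈ N₁.edgeSet <;> by_cases m2 : (e₂ : Sym2 V) ∈ N₁.edgeSet
    · have a1 := hadj1 e₁ m1
      have a2 := hadj1 e₂ m2
      rw [hx] at a1
      have := (h₁ a2.fst_mem).unique a1 a2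
      exact hval (by rw [← ho1 e₁, ← ho1 e₂, hx, this])
    · have c1 := ho3 e₁; have c2 := ho3 e₂
      rw [if_pos m1] at c1; rw [if_neg m2] at c2
      rw [hx, c2] at c1
      simp at c1
    · have c1 := ho3 e₁; have c2 := ho3 e₂
      rw [if_neg m1] at c1; rw [if_pos m2] at c2
      rw [hx, c2] at c1
      simp at c1
    · have a1 := hadj2 e₁ m1
      have a2 := hadj2 e₂ m2
      rw [hx] at a1
      have := (h₂ a2.fst_mem).unique a1 a2
      exact hval (by rw [← ho1 e₁, ← ho1 e₂, hx, this])
  -- distinct tails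
  have tails : (o e₁).2 ≠ (o e₂).2 := by
    intro hy
    by_cases m1 : (e₁ : Sym2 V) ∈ N₁.edgeSet <;> by_cases m2 : (e₂ : Sym2 V) ∈ N₁.edgeSet
    · have a1 := (hadj1 e₁ m1).symm
      have a2 := (hadj1 e₂ m2).symm
      rw [hy] at a1
      have := (h₁ a2.fst_mem).unique a1 a2
      exact hval (by rw [← ho1 e₁, ← ho1 e₂, hy, this])
    · have c1 := ho4 e₁; have c2 := ho4 e₂
      rw [if_pos m1] at c1; rw [if_neg m2] at c2
      rw [hy, c2] at c1
      simp at c1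
    · have c1 := ho4 e₁; have c2 := ho4 e₂
      rw [if_neg m1] at c1; rw [if_pos m2] at c2
      rw [hy, c2] at c1
      simp at c1
    · have a1 := (hadj2 e₁ m1).symm
      have a2 := (hadj2 e₂ m2).symm
      rw [hy] at a1
      have := (h₂ a2.fst_mem).unique a1 a2
      exact hval (by rw [← ho1 e₁, ← ho1 e₂, hy, this])
  -- the Clifford algebra computation
  have key : ∀ x y : M, QuadraticMap.polar Q x y = 0 →
      CliffordAlgebra.ι Q x * CliffordAlgebra.ι Q y =
        -(CliffordAlgebra.ι Q y * CliffordAlgebra.ι Q x) := by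
    intro x y h
    have := CliffordAlgebra.ι_mul_ι_add_swap (Q := Q) x y
    rw [h, map_zero] at this
    exact eq_neg_of_add_eq_zero_left this
  exact comm_of_anticomm
    (key _ _ (hcc _ _ heads))
    (key _ _ (hcd _ _))
    (key _ _ (by rw [QuadraticMap.polar_comm]; exact hcd _ _))
    (key _ _ (hdd _ _ tails))
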